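/- For any unital ring B and any integer n ≥ 2, the matrix ring M_n(B) is generated as a ring by its idempotent elements. -/

import Mathlib

open Matrix

lemma std_mem (B : Type*) [Ring B] (n : ℕ) (hn : 2 ≤ n) (i j : Fin n) (b : B) :
    single i j b ∈ Subring.closure {e : Matrix (Fin n) (Fin n) B | e * e = e} := by
  have key : ∀ (i j : Fin n), i ≠ j → ∀ b : B,
      single i j b ∈ Subring.closure {e : Matrix (Fin n) (Fin n) B | e * e = e} := by
    intro i j hij b
    have hdiag : single i i (1 : B) ∈
        Subring.closure {e : Matrix (Fin n) (Fin n) B | e * e = e} :=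
      Subring.subset_closure (by simp [Set.mem_setOf_eq])
    have hidem : (single i i (1 : B) + single i j b) ∈
        {e : Matrix (Fin n) (Fin n) B | e * e = e} := by
      simp only [Set.mem_setOf_eq, add_mul, mul_add, single_mul_single_same,
        single_mul_single_of_ne _ _ _ _ hij.symm]
      simp
    have := Subring.subset_closure hidem
    have : single i j b = (single i i (1 : B) + single i j b)
        - single i i (1 : B) := by rw [add_sub_cancel_left]
    rw [this]
    exact Subring.sub_mem _ (Subring.subset_closure hidem) hdiag
  rcases eq_or_ne i j with rfl | hij
  · haveI : Nontrivial (Fin n) := Fin.nontrivial_iff_two_le.mpr hn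
    obtain ⟨k, hk⟩ : ∃ k : Fin n, k ≠ i := exists_ne i
    have : single i i b = single i k b * single k i 1 := by
      rw [single_mul_single_same]; simp
    rw [this]
    exact Subring.mul_mem _ (key i k (Ne.symm hk) b) (key k i hk 1)
  · exact key i j hij b

theorem matrix_ring_generated_by_idempotents (B : Type*) [Ring B] (n : ℕ) (hn : 2 ≤ n) :
    Subring.closure {e : Matrix (Fin n) (Fin n) B | e * e = e} = ⊤ := by
  rw [eq_top_iff]
  intro M _
  rw [matrix_eq_sum_single M]
  exact Subring.sum_mem _ fun i _ => Subring.sum_mem _ fun j _ => std_mem B n hn i j (M i j)
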